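/- arXiv:0712.3091 — 2 statements merged into one kernel-verified Lean document; each statement's English description precedes it below -/
import Mathlib

section
/- Let d ≥ 1 and n ≥ 2 be integers. If a real polynomial Q in d variables satisfies L_1 Q = −(n−2)(n+d) Q, then the polynomial P(x) = (1−‖x‖²)Q(x) satisfies L_{−1} P = −n(n+d−2) P. -/
open MvPolynomial

/-- The Laplacian `Δ = ∑ ∂²/∂xᵢ²` acting on polynomials in `d` variables. -/
noncomputable def lap {d : ℕ} (P : MvPolynomial (Fin d) ℝ) : MvPolynomial (Fin d) ℝ :=
  ∑ i, pderiv i (pderiv i P)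

/-- The Euler operator `⟨x,∇⟩ = ∑ xᵢ ∂/∂xᵢ` acting on polynomials in `d` variables. -/
noncomputable def eulerOp {d : ℕ} (P : MvPolynomial (Fin d) ℝ) : MvPolynomial (Fin d) ℝ :=
  ∑ i, X i * pderiv i P

/-- The operator `L_μ P = ΔP − ⟨x,∇⟩²P − (2μ+d)⟨x,∇⟩P`. -/
noncomputable def Lop (d : ℕ) (μ : ℝ) (P : MvPolynomial (Fin d) ℝ) : MvPolynomial (Fin d) ℝ :=
  lap P - eulerOp (eulerOp P) - (2 * μ + (d : ℝ)) • eulerOp P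

/-- The polynomial `‖x‖² = x₁² + ⋯ + x_d²`. -/
noncomputable def normSq (d : ℕ) : MvPolynomial (Fin d) ℝ := ∑ i, X i ^ 2

lemma pderiv_normSq {d : ℕ} (i : Fin d) : pderiv i (normSq d) = 2 * X i := by
  rw [normSq, map_sum, Finset.sum_eq_single i]
  · rw [pow_two, pderiv_mul, pderiv_X_self]; ring
  · intro j _ hj
    rw [pow_two, pderiv_mul, pderiv_X_of_ne hj]; ring
  · intro h; exact absurd (Finset.mem_univ i) h

lemma eulerOp_mul {d : ℕ} (f g : MvPolynomial (Fin d) ℝ) :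
    eulerOp (f * g) = eulerOp f * g + f * eulerOp g := by
  simp only [eulerOp, pderiv_mul, mul_add, Finset.sum_add_distrib, Finset.sum_mul,
    Finset.mul_sum]
  congr 1 <;> exact Finset.sum_congr rfl (fun i _ => by ring)

lemma eulerOp_sub {d : ℕ} (f g : MvPolynomial (Fin d) ℝ) :
    eulerOp (f - g) = eulerOp f - eulerOp g := by
  simp [eulerOp, Finset.sum_sub_distrib, mul_sub]

lemma eulerOp_one {d : ℕ} : eulerOp (1 : MvPolynomial (Fin d) ℝ) = 0 := by
  simp [eulerOp]

lemma eulerOp_C_mul {d : ℕ} (r : ℝ) (P : MvPolynomial (Fin d) ℝ) :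
    eulerOp (C r * P) = C r * eulerOp P := by
  simp only [eulerOp, pderiv_C_mul, Finset.mul_sum]
  exact Finset.sum_congr rfl (fun i _ => by ring)

lemma eulerOp_normSq {d : ℕ} : eulerOp (normSq d) = 2 * normSq d := by
  simp only [eulerOp, pderiv_normSq]
  rw [normSq, Finset.mul_sum]
  exact Finset.sum_congr rfl (fun i _ => by ring)

lemma lap_mul {d : ℕ} (f g : MvPolynomial (Fin d) ℝ) :
    lap (f * g) = lap f * g + 2 * ∑ i, pderiv i f * pderiv i g + f * lap g := by
  simp only [lap, pderiv_mul, map_add, mul_add, add_mul, Finset.sum_add_distrib,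
    Finset.sum_mul, Finset.mul_sum, two_mul]
  ring_nf
  simp only [mul_comm g]
  ring

lemma lap_sub {d : ℕ} (f g : MvPolynomial (Fin d) ℝ) :
    lap (f - g) = lap f - lap g := by
  simp [lap, Finset.sum_sub_distrib]

lemma lap_one {d : ℕ} : lap (1 : MvPolynomial (Fin d) ℝ) = 0 := by simp [lap]

lemma lap_normSq {d : ℕ} :
    lap (normSq d) = (d : MvPolynomial (Fin d) ℝ) * 2 := by
  simp only [lap, pderiv_normSq]
  have h : ∀ i : Fin d, (pderiv i) ((2 : MvPolynomial (Fin d) ℝ) * X i)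
      = (2 : MvPolynomial (Fin d) ℝ) := by
    intro i
    rw [show (2 : MvPolynomial (Fin d) ℝ) = C 2 from (map_ofNat _ 2).symm,
      pderiv_C_mul, pderiv_X_self, mul_one, map_ofNat]
  simp only [h, Finset.sum_const, Finset.card_univ, Fintype.card_fin, nsmul_eq_mul]

/-- if `L_1 Q = −(n−2)(n+d) Q` then `P = (1−‖x‖²)Q` satisfies
`L_{−1} P = −n(n+d−2) P`. -/
theorem stmt2 (d : ℕ) (hd : 1 ≤ d) (n : ℕ) (hn : 2 ≤ n) (Q : MvPolynomial (Fin d) ℝ)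
    (hQ : Lop d 1 Q = (-((n : ℝ) - 2) * ((n : ℝ) + (d : ℝ))) • Q) :
    Lop d (-1) ((1 - normSq d) * Q) =
      (-(n : ℝ) * ((n : ℝ) + (d : ℝ) - 2)) • ((1 - normSq d) * Q) := by
  set S := normSq d with hS
  set f : MvPolynomial (Fin d) ℝ := 1 - S with hf
  have hEf : eulerOp f = -(2 * S) := by
    rw [hf, eulerOp_sub, eulerOp_one, eulerOp_normSq]; ring
  have hlapf : lap f = -((d : MvPolynomial (Fin d) ℝ) * 2) := by
    rw [hf, lap_sub, lap_one, lap_normSq]; ring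
  have hcross : (∑ i, pderiv i f * pderiv i Q) = -(2 * eulerOp Q) := by
    have hpd : ∀ i : Fin d, pderiv i f = -(2 * X i) := by
      intro i; rw [hf, map_sub, pderiv_normSq]; simp
    simp only [hpd, eulerOp, Finset.mul_sum, ← Finset.sum_neg_distrib]
    exact Finset.sum_congr rfl (fun i _ => by ring)
  have hES : eulerOp (S * Q) = 2 * (S * Q) + S * eulerOp Q := by
    rw [eulerOp_mul, eulerOp_normSq]; ring
  have h1 : eulerOp (f * Q) = f * eulerOp Q - 2 * (S * Q) := by
    rw [eulerOp_mul, hEf]; ring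
  have h2 : eulerOp (eulerOp (f * Q)) =
      f * eulerOp (eulerOp Q) - 4 * (S * eulerOp Q) - 4 * (S * Q) := by
    rw [h1, show f * eulerOp Q - 2 * (S * Q)
        = f * eulerOp Q - C 2 * (S * Q) by rw [map_ofNat],
      eulerOp_sub, eulerOp_mul f (eulerOp Q), hEf, eulerOp_C_mul, hES, map_ofNat]
    ring
  have h3 : lap (f * Q) = -((d : MvPolynomial (Fin d) ℝ) * 2) * Q
      - 4 * eulerOp Q + f * lap Q := by
    rw [lap_mul, hlapf, hcross]; ring
  simp only [Lop, smul_eq_C_mul, map_add, map_mul, map_neg, map_sub, map_one,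
    map_ofNat, C_eq_coe_nat] at hQ ⊢
  rw [h3, h2, h1]
  linear_combination f * hQ
end

section
/- Let d be an odd positive integer and k ≥ 2 an integer. Then the operator L_{−k} has a complete polynomial basis of eigenfunctions: every real polynomial in d variables is a finite linear combination of polynomials P, each of which satisfies L_{−k} P = −m(m−2k+d) P for some nonnegative integer m. -/
open MvPolynomial

-- basic linearity
lemma lap_add {d : ℕ} (P Q : MvPolynomial (Fin d) ℝ) : lap (P + Q) = lap P + lap Q := by
  simp [lap, map_add, Finset.sum_add_distrib]

lemma lap_smul {d : ℕ} (c : ℝ) (P : MvPolynomial (Fin d) ℝ) : lap (c • P) = c • lap P := by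
  simp [lap, Finset.smul_sum]

lemma lap_sum {d : ℕ} {ι : Type*} (s : Finset ι) (f : ι → MvPolynomial (Fin d) ℝ) :
    lap (∑ j ∈ s, f j) = ∑ j ∈ s, lap (f j) := by
  simp [lap, map_sum]
  exact Finset.sum_comm

lemma lap_zero {d : ℕ} : lap (0 : MvPolynomial (Fin d) ℝ) = 0 := by simp [lap]

lemma eulerOp_add {d : ℕ} (P Q : MvPolynomial (Fin d) ℝ) :
    eulerOp (P + Q) = eulerOp P + eulerOp Q := by
  simp [eulerOp, map_add, mul_add, Finset.sum_add_distrib]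

lemma eulerOp_smul {d : ℕ} (c : ℝ) (P : MvPolynomial (Fin d) ℝ) :
    eulerOp (c • P) = c • eulerOp P := by
  simp [eulerOp, Finset.smul_sum, mul_smul_comm]

lemma eulerOp_sum {d : ℕ} {ι : Type*} (s : Finset ι) (f : ι → MvPolynomial (Fin d) ℝ) :
    eulerOp (∑ j ∈ s, f j) = ∑ j ∈ s, eulerOp (f j) := by
  simp [eulerOp, map_sum, Finset.mul_sum]
  exact Finset.sum_comm

lemma eulerOp_zero {d : ℕ} : eulerOp (0 : MvPolynomial (Fin d) ℝ) = 0 := by simp [eulerOp]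

lemma Lop_zero (d : ℕ) (μ : ℝ) : Lop d μ 0 = 0 := by
  simp [Lop, lap_zero, eulerOp_zero]

-- Euler's identity on a monomial
lemma eulerOp_monomial {d : ℕ} (s : Fin d →₀ ℕ) (a : ℝ) :
    eulerOp (monomial s a) = (s.degree : ℝ) • monomial s a := by
  have key : ∀ i : Fin d, X i * pderiv i (monomial s a) = ((s i : ℝ)) • monomial s a := by
    intro i
    rw [pderiv_monomial]
    rcases Nat.eq_zero_or_pos (s i) with h | h
    · simp [h]
    · have hle : Finsupp.single i 1 ≤ s := Finsupp.single_le_iff.mpr h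
      have : X i * monomial (s - Finsupp.single i 1) (a * (s i : ℝ)) =
          monomial (Finsupp.single i 1 + (s - Finsupp.single i 1)) (1 * (a * (s i : ℝ))) := by
        rw [X, monomial_mul]
      rw [this, add_tsub_cancel_of_le hle, smul_monomial, smul_eq_mul]
      ring_nf
  rw [eulerOp]
  simp_rw [key]
  rw [← Finset.sum_smul]
  congr 1
  rw [Finsupp.degree_apply]
  push_cast
  rw [Finset.sum_subset (Finset.subset_univ s.support)]
  intro x _ hx
  simp [Finsupp.notMem_support_iff.mp hx]

lemma eulerOp_homog {d n : ℕ} {P : MvPolynomial (Fin d) ℝ} (h : P.IsHomogeneous n) :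
    eulerOp P = (n : ℝ) • P := by
  conv_lhs => rw [← P.support_sum_monomial_coeff]
  conv_rhs => rw [← P.support_sum_monomial_coeff]
  rw [eulerOp_sum, Finset.smul_sum]
  apply Finset.sum_congr rfl
  intro s hs
  rw [eulerOp_monomial]
  congr 2
  by_contra hne
  exact (MvPolynomial.mem_support_iff.mp hs) (h.coeff_eq_zero hne)

lemma degree_single {d : ℕ} (i : Fin d) (n : ℕ) : (Finsupp.single i n).degree = n := by
  rcases Nat.eq_zero_or_pos n with h | h
  · simp [h, Finsupp.degree]
  · rw [Finsupp.degree_apply, Finsupp.support_single_ne_zero _ (by omega : n ≠ 0)]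
    simp

lemma degree_add {d : ℕ} (a b : Fin d →₀ ℕ) : (a + b).degree = a.degree + b.degree := by
  simp [Finsupp.degree_eq_weight_one, map_add]

lemma pderiv_homog {d n : ℕ} {P : MvPolynomial (Fin d) ℝ} (h : P.IsHomogeneous n) (i : Fin d) :
    (pderiv i P).IsHomogeneous (n - 1) := by
  conv => rw [← P.support_sum_monomial_coeff]
  rw [map_sum]
  apply MvPolynomial.IsHomogeneous.sum
  intro s hs
  rw [pderiv_monomial]
  rcases Nat.eq_zero_or_pos (s i) with h0 | h0
  · rw [h0]; push_cast; rw [mul_zero, map_zero]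
    exact MvPolynomial.isHomogeneous_zero _ _ _
  · apply MvPolynomial.isHomogeneous_monomial
    have hdeg : s.degree = n := by
      by_contra hne
      exact (MvPolynomial.mem_support_iff.mp hs) (h.coeff_eq_zero hne)
    have hle : Finsupp.single i 1 ≤ s := Finsupp.single_le_iff.mpr h0
    have hadd : (Finsupp.single i 1 + (s - Finsupp.single i 1)).degree = s.degree := by
      rw [add_tsub_cancel_of_le hle]
    rw [degree_add, degree_single] at hadd
    omega

lemma lap_homog {d n : ℕ} {P : MvPolynomial (Fin d) ℝ} (h : P.IsHomogeneous n) :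
    (lap P).IsHomogeneous (n - 2) := by
  rw [lap]
  apply MvPolynomial.IsHomogeneous.sum
  intro i _
  have := pderiv_homog (pderiv_homog h i) i
  rwa [Nat.sub_sub] at this

lemma pderiv_homog_zero {d : ℕ} {P : MvPolynomial (Fin d) ℝ} (h : P.IsHomogeneous 0)
    (i : Fin d) : pderiv i P = 0 := by
  conv => rw [← P.support_sum_monomial_coeff]
  rw [map_sum]
  apply Finset.sum_eq_zero
  intro s hs
  have hdeg : s.degree = 0 := by
    by_contra hne
    exact (MvPolynomial.mem_support_iff.mp hs) (h.coeff_eq_zero hne)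
  have hs0 : s = 0 := (Finsupp.degree_eq_zero_iff s).mp hdeg
  subst hs0
  rw [pderiv_monomial]
  simp

lemma lap_homog_le_one {d n : ℕ} {P : MvPolynomial (Fin d) ℝ} (h : P.IsHomogeneous n)
    (hn : n ≤ 1) : lap P = 0 := by
  rw [lap]
  apply Finset.sum_eq_zero
  intro i _
  have h1 : (pderiv i P).IsHomogeneous 0 := by
    have := pderiv_homog h i
    rwa [show n - 1 = 0 by omega] at this
  simp [pderiv_homog_zero h1 i]

/-- for odd dimension `d` and `k ≥ 2`, the operator `L_{−k}` has a complete
polynomial basis of eigenfunctions: every polynomial is in the span of the polynomials `P`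
satisfying `L_{−k} P = −m(m−2k+d) P` for some nonnegative integer `m`. -/
theorem stmt8 (d : ℕ) (hd : 1 ≤ d) (hodd : Odd d) (k : ℕ) (hk : 2 ≤ k) :
    Submodule.span ℝ {P : MvPolynomial (Fin d) ℝ |
        ∃ m : ℕ, Lop d (-(k : ℝ)) P =
          (-(m : ℝ) * ((m : ℝ) - 2 * (k : ℝ) + (d : ℝ))) • P} = ⊤ := by
  set S : Set (MvPolynomial (Fin d) ℝ) := {P : MvPolynomial (Fin d) ℝ |
        ∃ m : ℕ, Lop d (-(k : ℝ)) P =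
          (-(m : ℝ) * ((m : ℝ) - 2 * (k : ℝ) + (d : ℝ))) • P} with hS
  rw [eq_top_iff]
  have main : ∀ n : ℕ, ∀ P : MvPolynomial (Fin d) ℝ, P.IsHomogeneous n →
      P ∈ Submodule.span ℝ S := by
    intro n
    induction n using Nat.strong_induction_on with
    | _ n IH =>
      intro P hP
      -- the coefficients
      set β : ℕ → ℝ := fun i => (2*(i:ℝ)) * (2*(n:ℝ) - 2*(i:ℝ) + (d:ℝ) - 2*(k:ℝ)) with hβdef
      have hβ : ∀ i : ℕ, -β (i+1) ≠ 0 := by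
        intro i
        apply neg_ne_zero.mpr
        revert i
        intro i
        apply mul_ne_zero
        · push_cast; positivity
        · have hoddZ : Odd (2*(n:ℤ) - 2*((i:ℤ)+1) + (d:ℤ) - 2*(k:ℤ)) := by
            obtain ⟨t, ht⟩ := hodd
            exact ⟨(n:ℤ) - ((i:ℤ)+1) + (t:ℤ) - (k:ℤ), by rw [ht]; push_cast; ring⟩
          have hne : (2*(n:ℤ) - 2*((i:ℤ)+1) + (d:ℤ) - 2*(k:ℤ)) ≠ 0 := by
            intro h0; rw [h0] at hoddZ; exact (Int.not_even_iff_odd.mpr hoddZ) Even.zero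
          have hcast : ((2*(n:ℤ) - 2*((i:ℤ)+1) + (d:ℤ) - 2*(k:ℤ) : ℤ) : ℝ)
              = 2*(n:ℝ) - 2*(((i:ℕ)+1 : ℕ):ℝ) + (d:ℝ) - 2*(k:ℝ) := by push_cast; ring
          rw [← hcast]
          exact_mod_cast hne
      -- the sequence of polynomials
      set Q : ℕ → MvPolynomial (Fin d) ℝ :=
        fun i => Nat.rec P (fun i Qi => (-β (i+1))⁻¹ • lap Qi) i with hQdef
      have hQ0 : Q 0 = P := rfl
      have hQsucc : ∀ i, Q (i+1) = (-β (i+1))⁻¹ • lap (Q i) := fun i => rfl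
      have hhom : ∀ i, (Q i).IsHomogeneous (n - 2*i) := by
        intro i
        induction i with
        | zero => simpa [hQ0] using hP
        | succ i ih =>
          rw [hQsucc]
          have h2 := lap_homog ih
          rw [show n - 2*i - 2 = n - 2*(i+1) by omega] at h2
          simpa [smul_eq_C_mul] using h2.C_mul ((-β (i+1))⁻¹)
      have hlap : ∀ i, lap (Q i) = (-β (i+1)) • Q (i+1) := by
        intro i; rw [hQsucc, smul_inv_smul₀ (hβ i)]
      have hQzero : ∀ i, n < 2*i → Q i = 0 := by
        intro i
        induction i with
        | zero => omega
        | succ i ih =>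
          intro hlt
          rcases Nat.lt_or_ge n (2*i) with h | h
          · rw [hQsucc, ih h, lap_zero, smul_zero]
          · have hle1 : n - 2*i ≤ 1 := by omega
            rw [hQsucc, lap_homog_le_one (hhom i) hle1, smul_zero]
      have key : ∀ i, Lop d (-(k:ℝ)) (Q i) + ((n:ℝ)*((n:ℝ) - 2*(k:ℝ) + (d:ℝ))) • Q i
          = β i • Q i - β (i+1) • Q (i+1) := by
        intro i
        rcases Nat.lt_or_ge n (2*i) with h | h
        · rw [hQzero i h, hQzero (i+1) (by omega), Lop_zero]
          simp
        · have hcast : ((n - 2*i : ℕ) : ℝ) = (n:ℝ) - 2*(i:ℝ) := by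
            have := Nat.cast_sub (R := ℝ) (by omega : 2*i ≤ n)
            push_cast at this ⊢
            linarith
          have heuler : eulerOp (Q i) = ((n:ℝ) - 2*(i:ℝ)) • Q i := by
            rw [eulerOp_homog (hhom i), hcast]
          rw [Lop, heuler, eulerOp_smul, heuler, hlap i, hβdef]
          push_cast
          module
      set F : MvPolynomial (Fin d) ℝ := ∑ i ∈ Finset.range (n+1), Q i with hF
      have hLopsum : Lop d (-(k:ℝ)) F = ∑ i ∈ Finset.range (n+1), Lop d (-(k:ℝ)) (Q i) := by
        rw [hF]
        simp only [Lop]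
        rw [lap_sum, eulerOp_sum, eulerOp_sum, Finset.smul_sum,
          ← Finset.sum_sub_distrib, ← Finset.sum_sub_distrib]
      have hFmem : F ∈ S := by
        refine ⟨n, ?_⟩
        have hsum : Lop d (-(k:ℝ)) F + ((n:ℝ)*((n:ℝ) - 2*(k:ℝ) + (d:ℝ))) • F = 0 := by
          rw [hLopsum, hF, Finset.smul_sum, ← Finset.sum_add_distrib]
          rw [Finset.sum_congr rfl (fun i _ => key i)]
          rw [Finset.sum_range_sub' (fun i => β i • Q i) (n+1)]
          rw [hQzero (n+1) (by omega), hβdef]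
          simp
        have : Lop d (-(k:ℝ)) F = -(((n:ℝ)*((n:ℝ) - 2*(k:ℝ) + (d:ℝ))) • F) :=
          eq_neg_of_add_eq_zero_left hsum
        rw [this, ← neg_smul]
        congr 1
        ring
      have hFV : F ∈ Submodule.span ℝ S := Submodule.subset_span hFmem
      have hPeq : P = F - ∑ i ∈ Finset.range n, Q (i+1) := by
        rw [hF, Finset.sum_range_succ']
        rw [hQ0]
        abel
      rw [hPeq]
      refine Submodule.sub_mem _ hFV (Submodule.sum_mem _ ?_)
      intro i hi
      rcases Nat.lt_or_ge n (2*(i+1)) with h | h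
      · rw [hQzero (i+1) h]; exact Submodule.zero_mem _
      · exact IH (n - 2*(i+1)) (by omega) _ (hhom (i+1))
  intro P _
  rw [← P.sum_homogeneousComponent]
  exact Submodule.sum_mem _ fun i _ =>
    main i _ (MvPolynomial.homogeneousComponent_isHomogeneous i P)
end
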